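/- In a finite discounted MDP with α-optimal policy π*, for any policy π we have Q^{π}(s,a) ≤ Q^{π*}(s,a) for all (s,a), with equality at (s,a) if and only if π(·|s') = π*(·|s') for all states s' reachable with positive probability along π-trajectories starting from (s,a) at times t ≥ 1 (discounted by positive γ^t), assuming γ ∈ (0,1). -/

import Mathlib

open Finset

variable {S A : Type*}

/-- A policy: for each state, a probability distribution over actions. -/
def IsPolicy [Fintype A] (π : S → A → ℝ) : Prop :=
  (∀ s a, 0 ≤ π s a) ∧ ∀ s, ∑ a, π s a = 1

/-- A transition kernel: for each state-action pair, a distribution over next states. -/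
def IsKernel [Fintype S] (P : S → A → S → ℝ) : Prop :=
  (∀ s a s', 0 ≤ P s a s') ∧ ∀ s a, ∑ s', P s a s' = 1

/-- Shannon entropy of a finitely supported distribution. -/
noncomputable def entH [Fintype A] (p : A → ℝ) : ℝ := -∑ a, p a * Real.log (p a)

/-- Kullback–Leibler divergence on a finite set. -/
noncomputable def KLdiv [Fintype A] (p q : A → ℝ) : ℝ := ∑ a, p a * Real.log (p a / q a)

/-- Soft (log-sum-exp) value of a Q-function at a state. -/
noncomputable def softV [Fintype A] (α : ℝ) (Q : S → A → ℝ) (s : S) : ℝ :=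
  α * Real.log (∑ a, Real.exp (Q s a / α))

/-- Q satisfies the soft Bellman equation for policy π under reward r. -/
def IsSoftQ [Fintype S] [Fintype A] (P : S → A → S → ℝ) (r : S → A → ℝ) (γ α : ℝ)
    (π : S → A → ℝ) (Q : S → A → ℝ) : Prop :=
  ∀ s a, Q s a = r s a + γ * ∑ s', P s a s' *
    ((∑ a', π s' a' * Q s' a') + α * entH (π s'))

/-- π is the softmax (α-optimal) policy of the soft Q-function Q. -/
def IsAlphaOptimal [Fintype A] (α : ℝ) (π : S → A → ℝ) (Q : S → A → ℝ) : Prop :=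
  ∀ s a, π s a = Real.exp ((Q s a - softV α Q s) / α)

/-- `EKL P π πstar n s a` = expected KL divergence `D_KL(π(·|s_{n+1}) ‖ πstar(·|s_{n+1}))`
at time `n+1` along a π-trajectory started at `(s_0, a_0) = (s, a)`. -/
noncomputable def EKL [Fintype S] [Fintype A] (P : S → A → S → ℝ)
    (π πstar : S → A → ℝ) : ℕ → S → A → ℝ
  | 0 => fun s a => ∑ s', P s a s' * KLdiv (π s') (πstar s')
  | (n+1) => fun s a => ∑ s', P s a s' * ∑ a', π s' a' * EKL P π πstar n s' a'

/-- Sequential forward KL divergence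
`D̄(π‖πstar; s,a) = Σ_{t≥1} γ^t E[D_KL(π(·|s_t)‖πstar(·|s_t))]`. -/
noncomputable def seqKL [Fintype S] [Fintype A] (P : S → A → S → ℝ)
    (π πstar : S → A → ℝ) (γ : ℝ) (s : S) (a : A) : ℝ :=
  ∑' n : ℕ, γ ^ (n + 1) * EKL P π πstar n s a

/-- `stateDist P π n s a x` = probability of being at state `x` at time `n+1` along a
π-trajectory started at `(s_0, a_0) = (s, a)`. -/
noncomputable def stateDist [Fintype S] [Fintype A] (P : S → A → S → ℝ)
    (π : S → A → ℝ) : ℕ → S → A → S → ℝ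
  | 0 => fun s a x => P s a x
  | (n+1) => fun s a x => ∑ s', stateDist P π n s a s' * ∑ a', π s' a' * P s' a' x

/-! ### Auxiliary lemmas -/

lemma sum_pos_single' {ι : Type*} [Fintype ι] (f : ι → ℝ) (hnn : ∀ i, 0 ≤ f i)
    (i : ι) (hi : 0 < f i) : 0 < ∑ j, f j :=
  lt_of_lt_of_le hi (Finset.single_le_sum (fun j _ => hnn j) (Finset.mem_univ i))

lemma exists_pos_of_sum_pos' {ι : Type*} [Fintype ι] (f : ι → ℝ) (h : 0 < ∑ i, f i) :
    ∃ i, 0 < f i := by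
  by_contra hc
  push_neg at hc
  exact absurd (Finset.sum_nonpos fun i _ => hc i) (not_le.2 h)

lemma pos_pos_of_mul_pos' {x y : ℝ} (hx : 0 ≤ x) (hy : 0 ≤ y) (h : 0 < x * y) :
    0 < x ∧ 0 < y :=
  ⟨lt_of_le_of_ne hx (fun e => by simp [← e] at h),
   lt_of_le_of_ne hy (fun e => by simp [← e] at h)⟩

/-- Gibbs' inequality on a finite set. -/
lemma gibbs' [Fintype A] (p q : A → ℝ) (hp0 : ∀ a, 0 ≤ p a) (hp1 : ∑ a, p a = 1)
    (hq0 : ∀ a, 0 < q a) (hq1 : ∑ a, q a = 1) :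
    0 ≤ KLdiv p q ∧ (KLdiv p q = 0 → p = q) := by
  set f : A → ℝ := fun a => p a * Real.log (p a / q a) - p a + q a with hf
  have hfnn : ∀ a, 0 ≤ f a := by
    intro a
    rcases eq_or_lt_of_le (hp0 a) with h | h
    · simp [hf, ← h, le_of_lt (hq0 a)]
    · have hx : 0 < q a / p a := div_pos (hq0 a) h
      have hlog : Real.log (q a / p a) ≤ q a / p a - 1 := Real.log_le_sub_one_of_pos hx
      have hrw : Real.log (p a / q a) = - Real.log (q a / p a) := by
        rw [← Real.log_inv, inv_div]
      have hpq : p a * (q a / p a) = q a := by field_simp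
      simp only [hf, hrw]
      nlinarith [mul_le_mul_of_nonneg_left hlog (le_of_lt h), hpq]
  have hsum : KLdiv p q = ∑ a, f a := by
    simp [hf, KLdiv, Finset.sum_add_distrib, Finset.sum_sub_distrib, hp1, hq1]
  constructor
  · rw [hsum]; exact Finset.sum_nonneg fun a _ => hfnn a
  · intro h0
    have hz : ∀ a ∈ Finset.univ, f a = 0 := by
      rw [hsum] at h0
      exact (Finset.sum_eq_zero_iff_of_nonneg (fun a _ => hfnn a)).1 h0
    funext a
    have hfa := hz a (Finset.mem_univ a)
    rcases eq_or_lt_of_le (hp0 a) with h | h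
    · exfalso
      have : q a = 0 := by simp [hf, ← h] at hfa; linarith
      exact absurd this (ne_of_gt (hq0 a))
    · by_contra hne
      have hx : 0 < q a / p a := div_pos (hq0 a) h
      have hx1 : q a / p a ≠ 1 := by
        intro h1
        exact hne ((div_eq_one_iff_eq (ne_of_gt h)).1 h1).symm
      have hlog : Real.log (q a / p a) < q a / p a - 1 :=
        Real.log_lt_sub_one_of_pos hx hx1
      have hrw : Real.log (p a / q a) = - Real.log (q a / p a) := by
        rw [← Real.log_inv, inv_div]
      simp only [hf, hrw] at hfa
      have hpq : p a * (q a / p a) = q a := by field_simp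
      nlinarith [mul_lt_mul_of_pos_left hlog h, hpq]

lemma KL_self' [Fintype A] (p : A → ℝ) : KLdiv p p = 0 := by
  unfold KLdiv
  apply Finset.sum_eq_zero
  intro a _
  rcases eq_or_ne (p a) 0 with h | h
  · simp [h]
  · simp [div_self h]

/-- Value identity for the softmax policy. -/
lemma value_opt' [Fintype A] (α : ℝ) (hα : 0 < α) (πstar : S → A → ℝ)
    (hπ1 : ∀ s, ∑ a, πstar s a = 1)
    (Qstar : S → A → ℝ)
    (hopt : IsAlphaOptimal α πstar Qstar) (s : S) :
    ∑ a, πstar s a * Qstar s a + α * entH (πstar s) = softV α Qstar s := by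
  have hlog : ∀ a, Real.log (πstar s a) = (Qstar s a - softV α Qstar s) / α := by
    intro a; rw [hopt s a, Real.log_exp]
  have h1 : ∑ a, πstar s a * Real.log (πstar s a)
      = ∑ a, (πstar s a * Qstar s a / α - πstar s a * softV α Qstar s / α) := by
    apply Finset.sum_congr rfl
    intro a _
    rw [hlog a]; ring
  unfold entH
  rw [h1, Finset.sum_sub_distrib, ← Finset.sum_div, ← Finset.sum_div, ← Finset.sum_mul,
    hπ1 s]
  field_simp
  ring

/-- Value identity for an arbitrary policy. -/
lemma value_pol' [Fintype A] (α : ℝ) (hα : 0 < α) (π πstar : S → A → ℝ)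
    (hπ1 : ∀ s, ∑ a, π s a = 1) (hπ0 : ∀ s a, 0 ≤ π s a)
    (hpos : ∀ s a, 0 < πstar s a)
    (Qstar : S → A → ℝ)
    (hopt : IsAlphaOptimal α πstar Qstar) (s : S) :
    ∑ a, π s a * Qstar s a + α * entH (π s)
      = softV α Qstar s - α * KLdiv (π s) (πstar s) := by
  have hterm : ∀ a, α * (π s a * Real.log (π s a / πstar s a))
      = α * (π s a * Real.log (π s a)) - (π s a * Qstar s a - π s a * softV α Qstar s) := by
    intro a
    rcases eq_or_lt_of_le (hπ0 s a) with h | h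
    · simp [← h]
    · have hlogst : Real.log (πstar s a) = (Qstar s a - softV α Qstar s) / α := by
        rw [hopt s a, Real.log_exp]
      rw [Real.log_div (ne_of_gt h) (ne_of_gt (hpos s a)), hlogst]
      field_simp
  have hKL : α * KLdiv (π s) (πstar s)
      = α * (∑ a, π s a * Real.log (π s a)) - ∑ a, π s a * Qstar s a + softV α Qstar s := by
    unfold KLdiv
    rw [Finset.mul_sum]
    rw [Finset.sum_congr rfl (fun a _ => hterm a)]
    rw [Finset.sum_sub_distrib, Finset.sum_sub_distrib, ← Finset.mul_sum,
      ← Finset.sum_mul, hπ1 s]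
    ring
  unfold entH
  rw [hKL]
  ring

/-- Key recursion: the Q-gap satisfies a Bellman-type recursion with KL source term. -/
lemma key_rec' [Fintype S] [Fintype A]
    (P : S → A → S → ℝ) (r : S → A → ℝ) (γ α : ℝ) (hα : 0 < α)
    (π πstar : S → A → ℝ)
    (hπ1 : ∀ s, ∑ a, π s a = 1) (hπ0 : ∀ s a, 0 ≤ π s a)
    (hπs1 : ∀ s, ∑ a, πstar s a = 1)
    (hpos : ∀ s a, 0 < πstar s a)
    (Qstar Qπ : S → A → ℝ)
    (hQstar : IsSoftQ P r γ α πstar Qstar)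
    (hopt : IsAlphaOptimal α πstar Qstar)
    (hQπ : IsSoftQ P r γ α π Qπ) (s : S) (a : A) :
    Qstar s a - Qπ s a = γ * ∑ s', P s a s' *
      (α * KLdiv (π s') (πstar s') + ∑ a', π s' a' * (Qstar s' a' - Qπ s' a')) := by
  have hcong : ∑ s', P s a s' * ((∑ a', πstar s' a' * Qstar s' a') + α * entH (πstar s'))
      - ∑ s', P s a s' * ((∑ a', π s' a' * Qπ s' a') + α * entH (π s'))
      = ∑ s', P s a s' *
        (α * KLdiv (π s') (πstar s') + ∑ a', π s' a' * (Qstar s' a' - Qπ s' a')) := by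
    rw [← Finset.sum_sub_distrib]
    apply Finset.sum_congr rfl
    intro s' _
    rw [← mul_sub]
    congr 1
    have h1 := value_opt' α hα πstar hπs1 Qstar hopt s'
    have h2 := value_pol' α hα π πstar hπ1 hπ0 hpos Qstar hopt s'
    have h3 : ∑ a', π s' a' * (Qstar s' a' - Qπ s' a')
        = ∑ a', π s' a' * Qstar s' a' - ∑ a', π s' a' * Qπ s' a' := by
      simp [mul_sub, Finset.sum_sub_distrib]
    linarith
  rw [hQstar s a, hQπ s a, ← hcong]
  ring

theorem stmt12 [Fintype S] [Fintype A] [Nonempty A]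
    (P : S → A → S → ℝ) (hP : IsKernel P)
    (r : S → A → ℝ) (γ α : ℝ) (hγ0 : 0 < γ) (hγ1 : γ < 1) (hα : 0 < α)
    (πstar π : S → A → ℝ) (hπstar : IsPolicy πstar) (hπ : IsPolicy π)
    (hpos : ∀ s a, 0 < πstar s a)
    (Qstar : S → A → ℝ) (hQstar : IsSoftQ P r γ α πstar Qstar)
    (hopt : IsAlphaOptimal α πstar Qstar)
    (Qπ : S → A → ℝ) (hQπ : IsSoftQ P r γ α π Qπ) :
    ∀ s a, Qπ s a ≤ Qstar s a ∧
      (Qπ s a = Qstar s a ↔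
        ∀ s' : S, (∃ n : ℕ, 0 < stateDist P π n s a s') → π s' = πstar s') := by
  obtain ⟨hP0, hP1⟩ := hP
  obtain ⟨hπ0, hπ1⟩ := hπ
  obtain ⟨hπs0, hπs1⟩ := hπstar
  intro s a
  haveI : Nonempty S := ⟨s⟩
  set Δ : S → A → ℝ := fun u b => Qstar u b - Qπ u b with hΔdef
  have key : ∀ u b, Δ u b = γ * ∑ s', P u b s' *
      (α * KLdiv (π s') (πstar s') + ∑ a', π s' a' * Δ s' a') := by
    intro u b
    simp only [hΔdef]
    exact key_rec' P r γ α hα π πstar hπ1 hπ0 hπs1 hpos Qstar Qπ hQstar hopt hQπ u b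
  have hKL0 : ∀ s', 0 ≤ KLdiv (π s') (πstar s') :=
    fun s' => (gibbs' (π s') (πstar s') (hπ0 s') (hπ1 s') (hpos s') (hπs1 s')).1
  have hKLeq : ∀ s', KLdiv (π s') (πstar s') = 0 → π s' = πstar s' :=
    fun s' => (gibbs' (π s') (πstar s') (hπ0 s') (hπ1 s') (hpos s') (hπs1 s')).2
  -- nonnegativity of the gap
  have hΔ0 : ∀ u b, 0 ≤ Δ u b := by
    obtain ⟨p0, -, hmin⟩ := Finset.exists_min_image (univ : Finset (S × A))
      (fun p => Δ p.1 p.2) univ_nonempty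
    have hmin' : ∀ u b, Δ p0.1 p0.2 ≤ Δ u b := fun u b => hmin (u, b) (mem_univ _)
    set m := Δ p0.1 p0.2 with hm
    suffices h : 0 ≤ m by intro u b; exact le_trans h (hmin' u b)
    have h1 : ∀ s', m ≤ α * KLdiv (π s') (πstar s') + ∑ a', π s' a' * Δ s' a' := by
      intro s'
      have h2 : ∑ a', π s' a' * m ≤ ∑ a', π s' a' * Δ s' a' :=
        Finset.sum_le_sum (fun a' _ => mul_le_mul_of_nonneg_left (hmin' s' a') (hπ0 s' a'))
      have h3 : ∑ a', π s' a' * m = m := by rw [← Finset.sum_mul, hπ1 s', one_mul]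
      nlinarith [mul_nonneg (le_of_lt hα) (hKL0 s')]
    have h4 : ∑ s', P p0.1 p0.2 s' * m ≤ ∑ s', P p0.1 p0.2 s' *
        (α * KLdiv (π s') (πstar s') + ∑ a', π s' a' * Δ s' a') :=
      Finset.sum_le_sum fun s' _ => mul_le_mul_of_nonneg_left (h1 s') (hP0 _ _ s')
    have h5 : ∑ s', P p0.1 p0.2 s' * m = m := by rw [← Finset.sum_mul, hP1, one_mul]
    have hstep : γ * m ≤ m := by
      calc γ * m = γ * ∑ s', P p0.1 p0.2 s' * m := by rw [h5]
        _ ≤ γ * ∑ s', P p0.1 p0.2 s' *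
            (α * KLdiv (π s') (πstar s') + ∑ a', π s' a' * Δ s' a') :=
          mul_le_mul_of_nonneg_left h4 (le_of_lt hγ0)
        _ = m := (key p0.1 p0.2).symm
    nlinarith [hstep]
  -- one-step zero propagation
  have zeroStep : ∀ u b, Δ u b = 0 → ∀ x, 0 < P u b x →
      π x = πstar x ∧ ∀ b', 0 < π x b' → Δ x b' = 0 := by
    intro u b h0 x hx
    have hsum0 : ∑ s', P u b s' *
        (α * KLdiv (π s') (πstar s') + ∑ a', π s' a' * Δ s' a') = 0 := by
      have hk := (key u b).symm
      rw [h0] at hk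
      rcases mul_eq_zero.1 hk with h | h
      · exact absurd h (ne_of_gt hγ0)
      · exact h
    have hnn : ∀ s' ∈ (univ : Finset S), 0 ≤ P u b s' *
        (α * KLdiv (π s') (πstar s') + ∑ a', π s' a' * Δ s' a') := by
      intro s' _
      apply mul_nonneg (hP0 u b s')
      exact add_nonneg (mul_nonneg hα.le (hKL0 s'))
        (Finset.sum_nonneg fun a' _ => mul_nonneg (hπ0 s' a') (hΔ0 s' a'))
    have h1 := (Finset.sum_eq_zero_iff_of_nonneg hnn).1 hsum0 x (mem_univ x)
    have h2 : α * KLdiv (π x) (πstar x) + ∑ a', π x a' * Δ x a' = 0 := by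
      rcases mul_eq_zero.1 h1 with h | h
      · exact absurd h (ne_of_gt hx)
      · exact h
    have hKnn : 0 ≤ α * KLdiv (π x) (πstar x) := mul_nonneg hα.le (hKL0 x)
    have hSnn : 0 ≤ ∑ a', π x a' * Δ x a' :=
      Finset.sum_nonneg fun a' _ => mul_nonneg (hπ0 x a') (hΔ0 x a')
    have hK : KLdiv (π x) (πstar x) = 0 := by
      have hz : α * KLdiv (π x) (πstar x) = 0 := le_antisymm (by linarith) hKnn
      rcases mul_eq_zero.1 hz with h | h
      · exact absurd h (ne_of_gt hα)
      · exact h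
    refine ⟨hKLeq x hK, ?_⟩
    intro b' hb'
    have hs0 : ∑ a', π x a' * Δ x a' = 0 := le_antisymm (by linarith) hSnn
    have hterm := (Finset.sum_eq_zero_iff_of_nonneg
      (fun a' _ => mul_nonneg (hπ0 x a') (hΔ0 x a'))).1 hs0 b' (mem_univ b')
    rcases mul_eq_zero.1 hterm with h | h
    · exact absurd h (ne_of_gt hb')
    · exact h
  -- state distributions are nonnegative
  have hsd0 : ∀ n u b x, 0 ≤ stateDist P π n u b x := by
    intro n
    induction n with
    | zero => intro u b x; exact hP0 u b x
    | succ n ih =>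
      intro u b x
      exact Finset.sum_nonneg fun s' _ => mul_nonneg (ih u b s')
        (Finset.sum_nonneg fun a' _ => mul_nonneg (hπ0 s' a') (hP0 s' a' x))
  -- n-step zero propagation
  have prop : ∀ n u b, Δ u b = 0 → ∀ x, 0 < stateDist P π n u b x →
      π x = πstar x ∧ ∀ b', 0 < π x b' → Δ x b' = 0 := by
    intro n
    induction n with
    | zero => intro u b h0 x hx; exact zeroStep u b h0 x hx
    | succ n ih =>
      intro u b h0 x hx
      simp only [stateDist] at hx
      obtain ⟨s', hs'⟩ := exists_pos_of_sum_pos' _ hx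
      obtain ⟨hsd, hin⟩ := pos_pos_of_mul_pos' (hsd0 n u b s')
        (Finset.sum_nonneg fun a' _ => mul_nonneg (hπ0 s' a') (hP0 s' a' x)) hs'
      obtain ⟨a', ha'⟩ := exists_pos_of_sum_pos' _ hin
      obtain ⟨hπa, hPx⟩ := pos_pos_of_mul_pos' (hπ0 s' a') (hP0 s' a' x) ha'
      exact zeroStep s' a' ((ih u b h0 s' hsd).2 a' hπa) x hPx
  have hΔsa : 0 ≤ Δ s a := hΔ0 s a
  refine ⟨by simp only [hΔdef] at hΔsa; linarith, ?_, ?_⟩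
  · -- forward direction
    rintro hQeq s' ⟨n, hn⟩
    have h0 : Δ s a = 0 := by simp [hΔdef, hQeq]
    exact (prop n s a h0 s' hn).1
  · -- backward direction
    intro hreach
    obtain ⟨p0, -, hmax⟩ := Finset.exists_max_image (univ : Finset (S × A))
      (fun p => Δ p.1 p.2) univ_nonempty
    have hmax' : ∀ u b, Δ u b ≤ Δ p0.1 p0.2 := fun u b => hmax (u, b) (mem_univ _)
    set M := Δ p0.1 p0.2 with hM
    have hM0 : 0 ≤ M := le_trans (hΔ0 s a) (hmax' s a)
    have hreachP : ∀ u b s', ((u = s ∧ b = a) ∨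
        ((∃ m, 0 < stateDist P π m s a u) ∧ 0 < π u b)) → 0 < P u b s' →
        ∃ m, 0 < stateDist P π m s a s' := by
      rintro u b s' (⟨rfl, rfl⟩ | ⟨⟨m, hm⟩, hπub⟩) hPs'
      · exact ⟨0, hPs'⟩
      · refine ⟨m + 1, ?_⟩
        show 0 < ∑ w, stateDist P π m s a w * ∑ a', π w a' * P w a' s'
        apply sum_pos_single' _ (fun w => mul_nonneg (hsd0 m s a w)
          (Finset.sum_nonneg fun a' _ => mul_nonneg (hπ0 w a') (hP0 w a' s'))) u
        exact mul_pos hm (sum_pos_single' _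
          (fun a' => mul_nonneg (hπ0 u a') (hP0 u a' s')) b (mul_pos hπub hPs'))
    have claim : ∀ n u b, ((u = s ∧ b = a) ∨
        ((∃ m, 0 < stateDist P π m s a u) ∧ 0 < π u b)) → Δ u b ≤ γ ^ n * M := by
      intro n
      induction n with
      | zero => intro u b _; simpa using hmax' u b
      | succ n ih =>
        intro u b hub
        have hbound : ∀ s', P u b s' *
            (α * KLdiv (π s') (πstar s') + ∑ a', π s' a' * Δ s' a')
            ≤ P u b s' * (γ ^ n * M) := by
          intro s'
          rcases eq_or_lt_of_le (hP0 u b s') with h | h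
          · simp [← h]
          · apply mul_le_mul_of_nonneg_left _ (hP0 u b s')
            have hKLz : KLdiv (π s') (πstar s') = 0 := by
              rw [hreach s' (hreachP u b s' hub h)]; exact KL_self' _
            rw [hKLz, mul_zero, zero_add]
            have hterm : ∀ a', π s' a' * Δ s' a' ≤ π s' a' * (γ ^ n * M) := by
              intro a'
              rcases eq_or_lt_of_le (hπ0 s' a') with h2 | h2
              · simp [← h2]
              · exact mul_le_mul_of_nonneg_left
                  (ih s' a' (Or.inr ⟨hreachP u b s' hub h, h2⟩)) (hπ0 s' a')
            calc ∑ a', π s' a' * Δ s' a' ≤ ∑ a', π s' a' * (γ ^ n * M) :=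
                Finset.sum_le_sum fun a' _ => hterm a'
              _ = γ ^ n * M := by rw [← Finset.sum_mul, hπ1 s', one_mul]
        calc Δ u b = γ * ∑ s', P u b s' *
              (α * KLdiv (π s') (πstar s') + ∑ a', π s' a' * Δ s' a') := key u b
          _ ≤ γ * ∑ s', P u b s' * (γ ^ n * M) :=
            mul_le_mul_of_nonneg_left (Finset.sum_le_sum fun s' _ => hbound s') hγ0.le
          _ = γ * (γ ^ n * M) := by rw [← Finset.sum_mul, hP1, one_mul]
          _ = γ ^ (n + 1) * M := by ring
    have hle0 : Δ s a ≤ 0 := by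
      have htend : Filter.Tendsto (fun n => γ ^ n * M) Filter.atTop (nhds 0) := by
        have hpow := tendsto_pow_atTop_nhds_zero_of_lt_one hγ0.le hγ1
        simpa using hpow.mul_const M
      exact ge_of_tendsto' htend (fun n => claim n s a (Or.inl ⟨rfl, rfl⟩))
    have hz : Δ s a = 0 := le_antisymm hle0 (hΔ0 s a)
    simp only [hΔdef] at hz
    linarith
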